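/- Let x = P(x) be a minimax-PPS whose greatest fixed point g* ∈ [0,1]^n satisfies g* < 1 in every coordinate. Then for every LDF policy τ' for the min player, g* ≤ q*_{*,τ'}, where q*_{*,τ'} is the least fixed point in [0,1]^n of the maxPPS x = P_{*,τ'}(x). -/

import Mathlib

open Filter Topology

/-- A probabilistic polynomial in `n` variables: `∑ r, p r * x ^ expo r`,
with nonnegative coefficients summing to at most 1. -/
structure ProbPoly (n : ℕ) where
  numTerms : ℕ
  p : Fin numTerms → ℝ
  expo : Fin numTerms → Fin n → ℕ
  p_nonneg : ∀ r, 0 ≤ p r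
  p_sum_le_one : ∑ r, p r ≤ 1

/-- Evaluation of a probabilistic polynomial. -/
def ProbPoly.eval {n : ℕ} (P : ProbPoly n) (x : Fin n → ℝ) : ℝ :=
  ∑ r, P.p r * ∏ i, x i ^ P.expo r i

/-- The unit box `[0,1]^n`. -/
def box01 (n : ℕ) : Set (Fin n → ℝ) := {x | ∀ i, 0 ≤ x i ∧ x i ≤ 1}

/-- The minimax value of the zero-sum matrix game with payoff matrix `B`:
`Val(B) = max_{s ∈ Δ_k} min_{t ∈ Δ_m} sᵀ B t`. -/
noncomputable def gameVal {k m : ℕ} (B : Matrix (Fin k) (Fin m) ℝ) : ℝ :=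
  ⨆ s : stdSimplex ℝ (Fin k), ⨅ t : stdSimplex ℝ (Fin m),
    ∑ i : Fin k, ∑ j : Fin m, s.1 i * B i j * t.1 j

/-- A probability distribution on `Fin k`. -/
def IsDist {k : ℕ} (d : Fin k → ℝ) : Prop := (∀ j, 0 ≤ d j) ∧ ∑ j, d j = 1

/-- `g` is the greatest fixed point of `F` in `[0,1]^n`. -/
def IsGFP {n : ℕ} (F : (Fin n → ℝ) → Fin n → ℝ) (g : Fin n → ℝ) : Prop :=
  g ∈ box01 n ∧ F g = g ∧ ∀ g' ∈ box01 n, F g' = g' → g' ≤ g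

/-- `q` is the least fixed point of `F` in `[0,1]^n`. -/
def IsLFP {n : ℕ} (F : (Fin n → ℝ) → Fin n → ℝ) (q : Fin n → ℝ) : Prop :=
  q ∈ box01 n ∧ F q = q ∧ ∀ q' ∈ box01 n, F q' = q' → q ≤ q'

/-- A minimax probabilistic polynomial system (minimax-PPS) in `n` variables:
for each `i`, an `nr i × nc i` matrix of probabilistic polynomials. -/
structure MinimaxPPS (n : ℕ) where
  nr : Fin n → ℕ
  nc : Fin n → ℕ
  nr_pos : ∀ i, 0 < nr i
  nc_pos : ∀ i, 0 < nc i
  q : (i : Fin n) → Fin (nr i) → Fin (nc i) → ProbPoly n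

namespace MinimaxPPS

/-- The payoff matrix `A_i(x)`. -/
noncomputable def A {n : ℕ} (P : MinimaxPPS n) (i : Fin n) (x : Fin n → ℝ) :
    Matrix (Fin (P.nr i)) (Fin (P.nc i)) ℝ :=
  Matrix.of fun j k => (P.q i j k).eval x

/-- `P(x)`: coordinatewise the value of the matrix game `A_i(x)`. -/
noncomputable def eval {n : ℕ} (P : MinimaxPPS n) (x : Fin n → ℝ) : Fin n → ℝ :=
  fun i => gameVal (P.A i x)

/-- The minPPS `P_{σ,*}` obtained by fixing a mixed policy `σ` for the max player. -/
noncomputable def fixMax {n : ℕ} (P : MinimaxPPS n)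
    (σ : (i : Fin n) → Fin (P.nr i) → ℝ) (x : Fin n → ℝ) : Fin n → ℝ :=
  fun i => ⨅ k : Fin (P.nc i), ∑ j, σ i j * (P.q i j k).eval x

/-- The maxPPS `P_{*,τ}` obtained by fixing a mixed policy `τ` for the min player. -/
noncomputable def fixMin {n : ℕ} (P : MinimaxPPS n)
    (τ : (i : Fin n) → Fin (P.nc i) → ℝ) (x : Fin n → ℝ) : Fin n → ℝ :=
  fun i => ⨆ j : Fin (P.nr i), ∑ k, τ i k * (P.q i j k).eval x

/-- The PPS `P_{σ,τ}` obtained by fixing both policies. -/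
def fixBoth {n : ℕ} (P : MinimaxPPS n)
    (σ : (i : Fin n) → Fin (P.nr i) → ℝ) (τ : (i : Fin n) → Fin (P.nc i) → ℝ)
    (x : Fin n → ℝ) : Fin n → ℝ :=
  fun i => ∑ j, ∑ k, σ i j * τ i k * (P.q i j k).eval x

end MinimaxPPS

/-- A PPS: each coordinate is a probabilistic polynomial. -/
structure PPS (n : ℕ) where
  poly : Fin n → ProbPoly n

namespace PPS

def eval {n : ℕ} (P : PPS n) (x : Fin n → ℝ) : Fin n → ℝ := fun i => (P.poly i).eval x

/-- Edge of the dependency graph: `x_j` appears (with a nonzero coefficient) in `P_i(x)`. -/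
def depends {n : ℕ} (P : PPS n) (i j : Fin n) : Prop :=
  ∃ r, (P.poly i).p r ≠ 0 ∧ (P.poly i).expo r j ≠ 0

end PPS

/-- A probabilistic polynomial is linear degenerate: every term with nonzero coefficient
has total degree exactly 1 (so it is linear with no constant term), and the
coefficients sum to exactly 1. -/
def IsLDPoly {n : ℕ} (Q : ProbPoly n) : Prop :=
  (∀ r, Q.p r ≠ 0 → ∑ j, Q.expo r j = 1) ∧ ∑ r, Q.p r = 1

/-- There exists a bottom strongly connected component of the dependency relation `dep`
all of whose members satisfy `ld`. -/
def IsLDBottom {n : ℕ} (dep : Fin n → Fin n → Prop) (ld : Fin n → Prop) : Prop :=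
  ∃ S : Set (Fin n), S.Nonempty ∧
    (∀ i ∈ S, ∀ j ∈ S, Relation.ReflTransGen dep i j) ∧
    (∀ i ∈ S, ∀ j, dep i j → j ∈ S) ∧
    (∀ i ∈ S, ld i)

/-- A PPS is linear degenerate free (LDF): no bottom strongly connected component of its
dependency graph induces an LD subsystem. -/
def PPS.IsLDF {n : ℕ} (P : PPS n) : Prop :=
  ¬ IsLDBottom P.depends (fun i => IsLDPoly (P.poly i))

namespace MinimaxPPS

/-- Dependency relation of the PPS `P_{σ,τ}`. -/
def dependsMix {n : ℕ} (P : MinimaxPPS n) (σ : (i : Fin n) → Fin (P.nr i) → ℝ)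
    (τ : (i : Fin n) → Fin (P.nc i) → ℝ) (i j : Fin n) : Prop :=
  ∃ a b r, σ i a ≠ 0 ∧ τ i b ≠ 0 ∧ (P.q i a b).p r ≠ 0 ∧ (P.q i a b).expo r j ≠ 0

/-- Coordinate `i` of the PPS `P_{σ,τ}` is linear degenerate. -/
def IsLDMixAt {n : ℕ} (P : MinimaxPPS n) (σ : (i : Fin n) → Fin (P.nr i) → ℝ)
    (τ : (i : Fin n) → Fin (P.nc i) → ℝ) (i : Fin n) : Prop :=
  (∀ a b r, σ i a ≠ 0 → τ i b ≠ 0 → (P.q i a b).p r ≠ 0 → ∑ j, (P.q i a b).expo r j = 1) ∧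
  (∑ a, ∑ b, σ i a * τ i b * ∑ r, (P.q i a b).p r) = 1

/-- A mixed min-player policy `τ` is LDF if for every mixed max-player policy `σ`
the PPS `P_{σ,τ}` is an LDF-PPS. -/
def IsLDFPolicy {n : ℕ} (P : MinimaxPPS n) (τ : (i : Fin n) → Fin (P.nc i) → ℝ) : Prop :=
  ∀ σ : (i : Fin n) → Fin (P.nr i) → ℝ, (∀ i, IsDist (σ i)) →
    ¬ IsLDBottom (P.dependsMix σ τ) (P.IsLDMixAt σ τ)

end MinimaxPPS

/-- The three forms of equations in an SNF minimax-PPS. -/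
inductive SNFForm | L | Q | M
  deriving DecidableEq

/-- A minimax-PPS in simple normal form (SNF): each coordinate is of form L
(linear, `a0 i + ∑ j, a i j * x j`), form Q (`x (quadL i) * x (quadR i)`), or
form M (the value of a matrix game each of whose entries is a variable or the
constant 1, encoded by `Option (Fin n)` with `none` standing for `1`). -/
structure SNFPPS (n : ℕ) where
  form : Fin n → SNFForm
  a0 : Fin n → ℝ
  a : Fin n → Fin n → ℝ
  quadL : Fin n → Fin n
  quadR : Fin n → Fin n
  nr : Fin n → ℕ
  nc : Fin n → ℕ
  nr_pos : ∀ i, 0 < nr i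
  nc_pos : ∀ i, 0 < nc i
  entry : (i : Fin n) → Fin (nr i) → Fin (nc i) → Option (Fin n)
  a0_nonneg : ∀ i, 0 ≤ a0 i
  a_nonneg : ∀ i j, 0 ≤ a i j
  a_sum_le_one : ∀ i, a0 i + ∑ j, a i j ≤ 1

namespace SNFPPS

noncomputable def eval {n : ℕ} (P : SNFPPS n) (x : Fin n → ℝ) : Fin n → ℝ := fun i =>
  match P.form i with
  | SNFForm.L => P.a0 i + ∑ j, P.a i j * x j
  | SNFForm.Q => x (P.quadL i) * x (P.quadR i)
  | SNFForm.M => gameVal (Matrix.of fun j k => (P.entry i j k).elim 1 x)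

/-- The maxPPS `P_{*,τ}` obtained by fixing a mixed policy `τ` for the min player. -/
noncomputable def fixMin {n : ℕ} (P : SNFPPS n)
    (τ : (i : Fin n) → Fin (P.nc i) → ℝ) (x : Fin n → ℝ) : Fin n → ℝ := fun i =>
  match P.form i with
  | SNFForm.L => P.a0 i + ∑ j, P.a i j * x j
  | SNFForm.Q => x (P.quadL i) * x (P.quadR i)
  | SNFForm.M => ⨆ j : Fin (P.nr i), ∑ k, τ i k * (P.entry i j k).elim 1 x

/-- The minPPS `P_{σ,*}` obtained by fixing a mixed policy `σ` for the max player. -/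
noncomputable def fixMax {n : ℕ} (P : SNFPPS n)
    (σ : (i : Fin n) → Fin (P.nr i) → ℝ) (x : Fin n → ℝ) : Fin n → ℝ := fun i =>
  match P.form i with
  | SNFForm.L => P.a0 i + ∑ j, P.a i j * x j
  | SNFForm.Q => x (P.quadL i) * x (P.quadR i)
  | SNFForm.M => ⨅ k : Fin (P.nc i), ∑ j, σ i j * (P.entry i j k).elim 1 x

/-- `S` is closed under the rules defining the least closure set: it contains every
deficient form-L variable, and is closed under rules (a) and (b). -/
def Closed {n : ℕ} (P : SNFPPS n) (S : Set (Fin n)) : Prop :=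
  (∀ i, P.form i = SNFForm.L → P.a0 i + ∑ j, P.a i j < 1 → i ∈ S) ∧
  (∀ i, P.form i = SNFForm.L → (∃ j ∈ S, P.a i j ≠ 0) → i ∈ S) ∧
  (∀ i, P.form i = SNFForm.Q → (P.quadL i ∈ S ∨ P.quadR i ∈ S) → i ∈ S) ∧
  (∀ i, P.form i = SNFForm.M →
    (∀ r : Fin (P.nr i), ∃ c : Fin (P.nc i), ∃ v ∈ S, P.entry i r c = some v) → i ∈ S)

/-- The least closure set `S`. -/
def leastClosure {n : ℕ} (P : SNFPPS n) : Set (Fin n) := ⋂₀ {S | P.Closed S}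

end SNFPPS

/-- Labels for the three sets in the limit-sure construction: `s` (the set `S ∪ {1}`),
`f` (the set `F`), and `o` (the remaining set `O`). -/
inductive Lab | s | f | o
  deriving DecidableEq


section AuxProofs
open Finset
variable {L : ℝ}
def mgl (L x : ℝ) : ℝ := (1-L)*x + L
lemma mgl_id (L a b : ℝ) : mgl L a * mgl L b = mgl L (a*b) - L*(1-L)*((1-a)*(1-b)) := by
  unfold mgl; ring
lemma mgl_nonneg (hL0 : 0 ≤ L) (hL1 : L ≤ 1) {x : ℝ} (hx : 0 ≤ x) : 0 ≤ mgl L x := by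
  unfold mgl; nlinarith
lemma mgl_le_one (hL1 : L ≤ 1) {x : ℝ} (hx : x ≤ 1) : mgl L x ≤ 1 := by
  unfold mgl; nlinarith
lemma mgl_mul_le (hL0 : 0 ≤ L) (hL1 : L ≤ 1) {a b : ℝ} (ha : a ≤ 1) (hb : b ≤ 1) :
    mgl L a * mgl L b ≤ mgl L (a*b) := by
  have h : 0 ≤ L*(1-L)*((1-a)*(1-b)) :=
    mul_nonneg (mul_nonneg hL0 (by linarith)) (mul_nonneg (by linarith) (by linarith))
  rw [mgl_id]; linarith
lemma mgl_pow_le (hL0 : 0 ≤ L) (hL1 : L ≤ 1) {a : ℝ} (ha0 : 0 ≤ a) (ha1 : a ≤ 1) (e : ℕ) :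
    mgl L a ^ e ≤ mgl L (a ^ e) := by
  induction e with
  | zero => simp [mgl]
  | succ d ih =>
      have hp0 : (0:ℝ) ≤ a ^ d := pow_nonneg ha0 d
      have hp1 : a ^ d ≤ 1 := pow_le_one₀ ha0 ha1
      calc mgl L a ^ (d+1) = mgl L a ^ d * mgl L a := pow_succ _ _
        _ ≤ mgl L (a ^ d) * mgl L a := by
            apply mul_le_mul_of_nonneg_right ih (mgl_nonneg hL0 hL1 ha0)
        _ ≤ mgl L (a ^ d * a) := mgl_mul_le hL0 hL1 hp1 ha1
        _ = mgl L (a ^ (d+1)) := by rw [pow_succ]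
lemma mgl_prod_le (hL0 : 0 ≤ L) (hL1 : L ≤ 1) {ι : Type*} (s : Finset ι)
    (v : ι → ℝ) (e : ι → ℕ) (hv0 : ∀ j, 0 ≤ v j) (hv1 : ∀ j, v j ≤ 1) :
    ∏ j ∈ s, mgl L (v j) ^ e j ≤ mgl L (∏ j ∈ s, v j ^ e j) := by
  classical
  induction s using Finset.induction with
  | empty => simp [mgl]
  | insert _ _ hni ih =>
      rename_i j s
      rw [Finset.prod_insert hni, Finset.prod_insert hni]
      have hp0 : (0:ℝ) ≤ ∏ k ∈ s, v k ^ e k :=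
        Finset.prod_nonneg fun k _ => pow_nonneg (hv0 k) _
      have hp1 : ∏ k ∈ s, v k ^ e k ≤ 1 :=
        Finset.prod_le_one (fun k _ => pow_nonneg (hv0 k) _)
          (fun k _ => pow_le_one₀ (hv0 k) (hv1 k))
      calc mgl L (v j) ^ e j * ∏ k ∈ s, mgl L (v k) ^ e k
          ≤ mgl L (v j) ^ e j * mgl L (∏ k ∈ s, v k ^ e k) := by
            apply mul_le_mul_of_nonneg_left ih
            exact pow_nonneg (mgl_nonneg hL0 hL1 (hv0 j)) _
        _ ≤ mgl L ((v j) ^ e j) * mgl L (∏ k ∈ s, v k ^ e k) := by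
            apply mul_le_mul_of_nonneg_right (mgl_pow_le hL0 hL1 (hv0 j) (hv1 j) _)
            exact mgl_nonneg hL0 hL1 hp0
        _ ≤ mgl L ((v j) ^ e j * ∏ k ∈ s, v k ^ e k) :=
            mgl_mul_le hL0 hL1 (pow_le_one₀ (hv0 j) (hv1 j)) hp1

lemma mgl_prod_lt (hL0 : 0 < L) (hL1 : L < 1) {ι : Type*} [DecidableEq ι] (s : Finset ι)
    (v : ι → ℝ) (e : ι → ℕ) (hv0 : ∀ j, 0 ≤ v j) (hv1 : ∀ j, v j ≤ 1)
    (hsup : ∀ j ∈ s, e j ≠ 0 → v j < 1) (hd : 2 ≤ ∑ j ∈ s, e j) :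
    ∏ j ∈ s, mgl L (v j) ^ e j < mgl L (∏ j ∈ s, v j ^ e j) := by
  have hL0' : (0:ℝ) ≤ L := le_of_lt hL0
  have hL1' : L ≤ 1 := le_of_lt hL1
  -- find j0 with e j0 ≠ 0
  have hex : ∃ j0 ∈ s, e j0 ≠ 0 := by
    by_contra h
    push_neg at h
    have : ∑ j ∈ s, e j = 0 := Finset.sum_eq_zero h
    omega
  obtain ⟨j0, hj0s, hj0⟩ := hex
  obtain ⟨d, hdd⟩ : ∃ d, e j0 = d + 1 := ⟨e j0 - 1, by omega⟩
  set m' : ℝ := v j0 ^ d * ∏ k ∈ s.erase j0, v k ^ e k with hm'def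
  have hp0 : ∀ (t : Finset ι), (0:ℝ) ≤ ∏ k ∈ t, v k ^ e k :=
    fun t => Finset.prod_nonneg fun k _ => pow_nonneg (hv0 k) _
  have hp1 : ∀ (t : Finset ι), ∏ k ∈ t, v k ^ e k ≤ 1 :=
    fun t => Finset.prod_le_one (fun k _ => pow_nonneg (hv0 k) _)
      (fun k _ => pow_le_one₀ (hv0 k) (hv1 k))
  have hm'0 : 0 ≤ m' := mul_nonneg (pow_nonneg (hv0 j0) d) (hp0 _)
  have hm'1 : m' ≤ 1 :=
    mul_le_one₀ (pow_le_one₀ (hv0 j0) (hv1 j0)) (hp0 _) (hp1 _)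
  have hvj0 : v j0 < 1 := hsup j0 hj0s hj0
  -- m' < 1
  have hm' : m' < 1 := by
    rcases Nat.eq_zero_or_pos d with hd0 | hdpos
    · -- e j0 = 1, need another factor
      have hsum : (∑ j ∈ s.erase j0, e j) ≠ 0 := by
        have := Finset.add_sum_erase s e hj0s
        omega
      have hex1 : ∃ j1 ∈ s.erase j0, e j1 ≠ 0 := by
        by_contra h
        push_neg at h
        exact hsum (Finset.sum_eq_zero h)
      obtain ⟨j1, hj1e, hj1⟩ := hex1
      have hvj1 : v j1 < 1 := hsup j1 (Finset.mem_of_mem_erase hj1e) hj1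
      have h1 : ∏ k ∈ s.erase j0, v k ^ e k
          ≤ v j1 ^ e j1 * ∏ k ∈ (s.erase j0).erase j1, v k ^ e k := by
        exact le_of_eq (Finset.mul_prod_erase _ _ hj1e).symm
      have h2 : v j1 ^ e j1 * ∏ k ∈ (s.erase j0).erase j1, v k ^ e k ≤ v j1 ^ e j1 :=
        mul_le_of_le_one_right (pow_nonneg (hv0 j1) _) (hp1 _)
      have h3 : v j1 ^ e j1 < 1 := pow_lt_one₀ (hv0 j1) hvj1 hj1
      calc m' = ∏ k ∈ s.erase j0, v k ^ e k := by rw [hm'def, hd0]; ring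
        _ < 1 := by linarith
    · have h1 : v j0 ^ d ≤ v j0 := pow_le_of_le_one (hv0 j0) (le_of_lt hvj0) (by omega)
      have h2 : m' ≤ v j0 ^ d := mul_le_of_le_one_right (pow_nonneg (hv0 j0) d) (hp1 _)
      linarith
  -- Rest bound
  have hrest : mgl L (v j0) ^ d * ∏ k ∈ s.erase j0, mgl L (v k) ^ e k ≤ mgl L m' := by
    calc mgl L (v j0) ^ d * ∏ k ∈ s.erase j0, mgl L (v k) ^ e k
        ≤ mgl L (v j0 ^ d) * mgl L (∏ k ∈ s.erase j0, v k ^ e k) := by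
          apply mul_le_mul (mgl_pow_le hL0' hL1' (hv0 j0) (hv1 j0) d)
            (mgl_prod_le hL0' hL1' _ v e hv0 hv1)
            (Finset.prod_nonneg fun k _ => pow_nonneg (mgl_nonneg hL0' hL1' (hv0 k)) _)
            (mgl_nonneg hL0' hL1' (pow_nonneg (hv0 j0) d))
      _ ≤ mgl L m' := mgl_mul_le hL0' hL1' (pow_le_one₀ (hv0 j0) (hv1 j0)) (hp1 _)
  have hA0 : 0 ≤ mgl L (v j0) := mgl_nonneg hL0' hL1' (hv0 j0)
  have hsplit : ∏ j ∈ s, mgl L (v j) ^ e j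
      = mgl L (v j0) * (mgl L (v j0) ^ d * ∏ k ∈ s.erase j0, mgl L (v k) ^ e k) := by
    rw [← Finset.mul_prod_erase _ _ hj0s, hdd, pow_succ]; ring
  have hsplit2 : ∏ j ∈ s, v j ^ e j = v j0 * m' := by
    rw [← Finset.mul_prod_erase _ _ hj0s, hm'def, hdd, pow_succ]; ring
  have hstrict : 0 < L*(1-L)*((1 - v j0)*(1 - m')) := by
    apply mul_pos (mul_pos hL0 (by linarith))
    apply mul_pos (by linarith) (by linarith)
  calc ∏ j ∈ s, mgl L (v j) ^ e j
      = mgl L (v j0) * (mgl L (v j0) ^ d * ∏ k ∈ s.erase j0, mgl L (v k) ^ e k) := hsplit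
    _ ≤ mgl L (v j0) * mgl L m' := mul_le_mul_of_nonneg_left hrest hA0
    _ = mgl L (v j0 * m') - L*(1-L)*((1 - v j0)*(1 - m')) := mgl_id L _ _
    _ < mgl L (v j0 * m') := by linarith
    _ = mgl L (∏ j ∈ s, v j ^ e j) := by rw [hsplit2]
lemma exists_bottom_scc {n : ℕ} (dep : Fin n → Fin n → Prop) (C : Set (Fin n))
    (hne : C.Nonempty) (hcl : ∀ i ∈ C, ∀ j, dep i j → j ∈ C) :
    ∃ T : Set (Fin n), T.Nonempty ∧ (∀ i ∈ T, ∀ j ∈ T, Relation.ReflTransGen dep i j) ∧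
      (∀ i ∈ T, ∀ j, dep i j → j ∈ T) ∧ T ⊆ C := by
  classical
  set Reach : Fin n → Finset (Fin n) :=
    fun i => Finset.univ.filter (fun j => Relation.ReflTransGen dep i j) with hR
  have hmemR : ∀ i j, j ∈ Reach i ↔ Relation.ReflTransGen dep i j := by
    intro i j; simp [hR]
  have hselfR : ∀ i, i ∈ Reach i := fun i => (hmemR i i).2 Relation.ReflTransGen.refl
  have hsubR : ∀ i j, j ∈ Reach i → Reach j ⊆ Reach i := by
    intro i j hj k hk
    exact (hmemR i k).2 (((hmemR i j).1 hj).trans ((hmemR j k).1 hk))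
  have hclR0 : ∀ i, i ∈ C → ∀ j, Relation.ReflTransGen dep i j → j ∈ C := by
    intro i hi j h
    induction h with
    | refl => exact hi
    | tail _ hstep ih => exact hcl _ ih _ hstep
  have hclR : ∀ i ∈ C, (Reach i : Set (Fin n)) ⊆ C := by
    intro i hi j hj
    exact hclR0 i hi j ((hmemR i j).1 hj)
  obtain ⟨i1, hi1⟩ := hne
  have hCne : (Finset.univ.filter (fun i => i ∈ C)).Nonempty :=
    ⟨i1, by simp [hi1]⟩
  obtain ⟨i0, hi0mem, hi0min⟩ :=
    Finset.exists_min_image (Finset.univ.filter (fun i => i ∈ C))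
      (fun i => (Reach i).card) hCne
  have hi0C : i0 ∈ C := by simpa using hi0mem
  refine ⟨(Reach i0 : Set (Fin n)), ⟨i0, hselfR i0⟩, ?_, ?_, hclR i0 hi0C⟩
  · intro i hi j hj
    have hiC : i ∈ C := hclR i0 hi0C hi
    have hsub : Reach i ⊆ Reach i0 := hsubR _ _ hi
    have hcard : (Reach i0).card ≤ (Reach i).card :=
      hi0min i (by simp [hiC])
    have heq : Reach i = Reach i0 := Finset.eq_of_subset_of_card_le hsub hcard
    have : j ∈ Reach i := heq ▸ hj
    exact (hmemR i j).1 this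
  · intro i hi j hij
    exact (hmemR i0 j).2 (Relation.ReflTransGen.tail ((hmemR i0 i).1 hi) hij)

theorem core_lemma {n : ℕ} (R : Fin n → Type) [∀ i, Fintype (R i)]
    (p : (i : Fin n) → R i → ℝ) (α : (i : Fin n) → R i → Fin n → ℕ)
    (hp : ∀ i r, 0 ≤ p i r) (hps : ∀ i, ∑ r, p i r ≤ 1)
    (hldf : ¬ IsLDBottom (fun i j => ∃ r, p i r ≠ 0 ∧ α i r j ≠ 0)
        (fun i => (∀ r, p i r ≠ 0 → ∑ j, α i r j = 1) ∧ ∑ r, p i r = 1))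
    (y : Fin n → ℝ) (hy0 : ∀ i, 0 ≤ y i) (hy1 : ∀ i, y i ≤ 1)
    (hyQ : ∀ i, ∑ r, p i r * ∏ j, y j ^ α i r j ≤ y i)
    (z : Fin n → ℝ) (hz0 : ∀ i, 0 ≤ z i) (hz1 : ∀ i, z i < 1)
    (hzQ : ∀ i, z i ≤ ∑ r, p i r * ∏ j, z j ^ α i r j) :
    z ≤ y := by
  classical
  by_contra hcon
  rw [Pi.le_def] at hcon
  push_neg at hcon
  obtain ⟨i0, hi0⟩ := hcon
  -- the lambda
  set f : Fin n → ℝ := fun i => if y i < 1 then (z i - y i)/(1 - y i) else 0 with hf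
  obtain ⟨istar, -, hmax⟩ :=
    Finset.exists_max_image Finset.univ f ⟨i0, Finset.mem_univ i0⟩
  set L : ℝ := f istar with hLdef
  have hyi0 : y i0 < 1 := lt_trans hi0 (hz1 i0)
  have hfi0 : 0 < f i0 := by
    rw [hf]; simp only [if_pos hyi0]
    exact div_pos (by linarith) (by linarith)
  have hL0 : 0 < L := lt_of_lt_of_le hfi0 (hmax i0 (Finset.mem_univ i0))
  have hflt1 : ∀ i, f i < 1 := by
    intro i
    rw [hf]
    by_cases h : y i < 1
    · simp only [if_pos h]
      rw [div_lt_one (by linarith)]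
      linarith [hz1 i]
    · simp only [if_neg h]; norm_num
  have hL1 : L < 1 := hflt1 istar
  have hL0' : (0:ℝ) ≤ L := le_of_lt hL0
  have hL1' : L ≤ 1 := le_of_lt hL1
  -- u
  set u : Fin n → ℝ := fun i => mgl L (y i) with hu
  have hu0 : ∀ i, 0 < u i := by
    intro i; rw [hu]; show 0 < (1-L)*(y i) + L
    nlinarith [hy0 i]
  have hu1 : ∀ i, u i ≤ 1 := fun i => mgl_le_one hL1' (hy1 i)
  have hyone : ∀ i, ¬ (y i < 1) → u i = 1 := by
    intro i h
    have : y i = 1 := le_antisymm (hy1 i) (not_lt.mp h)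
    rw [hu]; show (1-L)*(y i) + L = 1
    rw [this]; ring
  have hzu : ∀ i, z i ≤ u i := by
    intro i
    by_cases h : y i < 1
    · have hfi : f i ≤ L := hmax i (Finset.mem_univ i)
      rw [hf] at hfi; simp only [if_pos h] at hfi
      have := (div_le_iff₀ (by linarith : (0:ℝ) < 1 - y i)).mp hfi
      rw [hu]; show z i ≤ (1-L)*(y i) + L
      nlinarith
    · rw [hyone i h]; exact le_of_lt (hz1 i)
  -- E
  set inE : Fin n → Prop := fun i => y i < 1 ∧ z i = u i with hinE
  have histar1 : y istar < 1 := by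
    by_contra h
    have : f istar = 0 := by rw [hf]; simp only [if_neg h]
    have h2 : L = 0 := by rw [hLdef, this]
    rw [h2] at hL0
    exact lt_irrefl 0 hL0
  have histarE : inE istar := by
    refine ⟨histar1, ?_⟩
    have h1y : (1:ℝ) - y istar ≠ 0 := ne_of_gt (by linarith)
    have hfL : L = (z istar - y istar)/(1 - y istar) := by
      rw [hLdef, hf]; simp only [if_pos histar1]
    have : L * (1 - y istar) = z istar - y istar := by
      rw [hfL]; field_simp
    rw [hu]; show z istar = (1-L)*(y istar) + L
    nlinarith
  -- monotonicity of Q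
  have hQmono : ∀ (x w : Fin n → ℝ), (∀ j, 0 ≤ x j) → (∀ j, x j ≤ w j) → ∀ i,
      ∑ r, p i r * ∏ j, x j ^ α i r j ≤ ∑ r, p i r * ∏ j, w j ^ α i r j := by
    intro x w hx0 hxw i
    apply Finset.sum_le_sum
    intro r _
    apply mul_le_mul_of_nonneg_left _ (hp i r)
    apply Finset.prod_le_prod (fun j _ => pow_nonneg (hx0 j) _)
    exact fun j _ => pow_le_pow_left₀ (hx0 j) (hxw j) _
  -- main equality analysis on E
  have hEfacts : ∀ i, inE i →
      (∑ r, p i r * ∏ j, y j ^ α i r j = y i) ∧ (∑ r, p i r = 1) ∧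
      (∀ r, p i r ≠ 0 → (∀ j, α i r j ≠ 0 → inE j) ∧ ∑ j, α i r j ≤ 1) := by
    intro i hiE
    obtain ⟨hiy1, hiz⟩ := hiE
    have c1 : z i ≤ ∑ r, p i r * ∏ j, z j ^ α i r j := hzQ i
    have c2 : ∑ r, p i r * ∏ j, z j ^ α i r j ≤ ∑ r, p i r * ∏ j, u j ^ α i r j :=
      hQmono z u hz0 hzu i
    have huy : ∀ j, u j = mgl L (y j) := fun j => by rw [hu]
    have c3term : ∀ r, ∏ j, u j ^ α i r j ≤ mgl L (∏ j, y j ^ α i r j) := by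
      intro r
      have hrw : ∏ j, u j ^ α i r j = ∏ j, mgl L (y j) ^ α i r j :=
        Finset.prod_congr rfl (fun j _ => by rw [huy j])
      rw [hrw]
      exact mgl_prod_le hL0' hL1' Finset.univ y (α i r) hy0 hy1
    have c3 : ∑ r, p i r * ∏ j, u j ^ α i r j ≤ ∑ r, p i r * mgl L (∏ j, y j ^ α i r j) :=
      Finset.sum_le_sum (fun r _ => mul_le_mul_of_nonneg_left (c3term r) (hp i r))
    have c4 : ∑ r, p i r * mgl L (∏ j, y j ^ α i r j)
        = (1-L) * (∑ r, p i r * ∏ j, y j ^ α i r j) + L * (∑ r, p i r) := by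
      rw [Finset.mul_sum, Finset.mul_sum, ← Finset.sum_add_distrib]
      exact Finset.sum_congr rfl (fun r _ => by unfold mgl; ring)
    have c5 : (1-L) * (∑ r, p i r * ∏ j, y j ^ α i r j) + L * (∑ r, p i r)
        ≤ (1-L) * y i + L * 1 :=
      add_le_add (mul_le_mul_of_nonneg_left (hyQ i) (by linarith))
        (mul_le_mul_of_nonneg_left (hps i) hL0')
    have hui : (1-L) * y i + L * 1 = u i := by rw [hu]; show _ = (1-L)*(y i) + L; ring
    -- collapse the chain
    have hzui : z i = u i := hiz
    have e2 : ∑ r, p i r * ∏ j, z j ^ α i r j = ∑ r, p i r * ∏ j, u j ^ α i r j := by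
      linarith
    have e3 : ∑ r, p i r * ∏ j, u j ^ α i r j = ∑ r, p i r * mgl L (∏ j, y j ^ α i r j) := by
      linarith
    have e5 : (1-L) * (∑ r, p i r * ∏ j, y j ^ α i r j) + L * (∑ r, p i r)
        = (1-L) * y i + L * 1 := by linarith
    have hQyle := hyQ i
    have hpsle := hps i
    have EQ1 : ∑ r, p i r * ∏ j, y j ^ α i r j = y i := by nlinarith
    have EQ2 : ∑ r, p i r = 1 := by nlinarith
    refine ⟨EQ1, EQ2, ?_⟩
    -- per-term equalities
    have heq2 : ∀ r, p i r * ∏ j, z j ^ α i r j = p i r * ∏ j, u j ^ α i r j :=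
      fun r => (Finset.sum_eq_sum_iff_of_le (fun r _ =>
        mul_le_mul_of_nonneg_left (Finset.prod_le_prod
          (fun j _ => pow_nonneg (hz0 j) _)
          (fun j _ => pow_le_pow_left₀ (hz0 j) (hzu j) _)) (hp i r))).1 e2 r (Finset.mem_univ r)
    have heq3 : ∀ r, p i r * ∏ j, u j ^ α i r j = p i r * mgl L (∏ j, y j ^ α i r j) :=
      fun r => (Finset.sum_eq_sum_iff_of_le (fun r _ =>
        mul_le_mul_of_nonneg_left (c3term r) (hp i r))).1 e3 r (Finset.mem_univ r)
    intro r hpr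
    have hprodzu : ∏ j, z j ^ α i r j = ∏ j, u j ^ α i r j :=
      mul_left_cancel₀ hpr (heq2 r)
    have hmglr : ∏ j, u j ^ α i r j = mgl L (∏ j, y j ^ α i r j) :=
      mul_left_cancel₀ hpr (heq3 r)
    -- support in E
    have hsupp : ∀ j, α i r j ≠ 0 → inE j := by
      intro j hj
      have hzuj : z j = u j := by
        by_contra hne
        have hlt : z j < u j := lt_of_le_of_ne (hzu j) hne
        have hltp : z j ^ α i r j < u j ^ α i r j := pow_lt_pow_left₀ hlt (hz0 j) hj
        have h1 : ∏ k, z k ^ α i r k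
            = z j ^ α i r j * ∏ k ∈ Finset.univ.erase j, z k ^ α i r k :=
          (Finset.mul_prod_erase _ _ (Finset.mem_univ j)).symm
        have h2 : ∏ k, u k ^ α i r k
            = u j ^ α i r j * ∏ k ∈ Finset.univ.erase j, u k ^ α i r k :=
          (Finset.mul_prod_erase _ _ (Finset.mem_univ j)).symm
        have h3 : ∏ k ∈ Finset.univ.erase j, z k ^ α i r k
            ≤ ∏ k ∈ Finset.univ.erase j, u k ^ α i r k :=
          Finset.prod_le_prod (fun k _ => pow_nonneg (hz0 k) _)
            (fun k _ => pow_le_pow_left₀ (hz0 k) (hzu k) _)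
        have h4 : (0:ℝ) < ∏ k ∈ Finset.univ.erase j, u k ^ α i r k :=
          Finset.prod_pos (fun k _ => pow_pos (hu0 k) _)
        have h5 : ∏ k, z k ^ α i r k < ∏ k, u k ^ α i r k := by
          rw [h1, h2]
          calc z j ^ α i r j * ∏ k ∈ Finset.univ.erase j, z k ^ α i r k
              ≤ z j ^ α i r j * ∏ k ∈ Finset.univ.erase j, u k ^ α i r k :=
                mul_le_mul_of_nonneg_left h3 (pow_nonneg (hz0 j) _)
            _ < u j ^ α i r j * ∏ k ∈ Finset.univ.erase j, u k ^ α i r k :=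
                mul_lt_mul_of_pos_right hltp h4
        rw [hprodzu] at h5
        exact lt_irrefl _ h5
      have hyj1 : y j < 1 := by
        by_contra h
        have huj1 : u j = 1 := hyone j h
        rw [huj1] at hzuj
        exact absurd hzuj (ne_of_lt (hz1 j))
      exact ⟨hyj1, hzuj⟩
    refine ⟨hsupp, ?_⟩
    -- degree at most 1
    by_contra hdeg
    push_neg at hdeg
    have hd2 : 2 ≤ ∑ j, α i r j := hdeg
    have hstrict : ∏ j, mgl L (y j) ^ α i r j < mgl L (∏ j, y j ^ α i r j) :=
      mgl_prod_lt hL0 hL1 Finset.univ y (α i r) hy0 hy1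
        (fun j _ hj => (hsupp j hj).1) hd2
    have hrw : ∏ j, u j ^ α i r j = ∏ j, mgl L (y j) ^ α i r j :=
      Finset.prod_congr rfl (fun j _ => by rw [hu])
    rw [hrw] at hmglr
    rw [hmglr] at hstrict
    exact lt_irrefl _ hstrict
  -- minimum principle on E
  have hEne : (Finset.univ.filter (fun i => inE i)).Nonempty :=
    ⟨istar, by rw [Finset.mem_filter]; exact ⟨Finset.mem_univ istar, histarE⟩⟩
  obtain ⟨i1, hi1mem, hi1min⟩ :=
    Finset.exists_min_image (Finset.univ.filter (fun i => inE i)) y hEne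
  have hi1E : inE i1 := (Finset.mem_filter.1 hi1mem).2
  set m : ℝ := y i1 with hm
  have hm1 : m < 1 := hi1E.1
  have hmle : ∀ j, inE j → m ≤ y j := by
    intro j hj
    exact hi1min j (Finset.mem_filter.2 ⟨Finset.mem_univ j, hj⟩)
  set Em : Set (Fin n) := {i | inE i ∧ y i = m} with hEm
  have hkey : ∀ i ∈ Em, ∀ r, p i r ≠ 0 →
      (∑ j, α i r j = 1 ∧ ∀ j, α i r j ≠ 0 → j ∈ Em) := by
    intro i hiEm r hpr
    obtain ⟨hiE, hym⟩ := hiEm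
    obtain ⟨hQy, hsum1, hterms⟩ := hEfacts i hiE
    -- each nonzero term evaluates at y to at least m, and equals y j or 1
    have hterm_class : ∀ s, p i s ≠ 0 →
        (∏ j, y j ^ α i s j = 1 ∧ ∑ j, α i s j = 0) ∨
        (∃ j, α i s j ≠ 0 ∧ inE j ∧ ∏ j', y j' ^ α i s j' = y j ∧
          (∀ k, k ≠ j → α i s k = 0)) := by
      intro s hps'
      obtain ⟨hsupp, hdge⟩ := hterms s hps'
      rcases Nat.lt_or_ge (∑ j, α i s j) 1 with h0 | h1
      · left
        have h00 : ∑ j, α i s j = 0 := by omega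
        have hall : ∀ j, α i s j = 0 := by
          intro j
          exact Finset.sum_eq_zero_iff.1 h00 j (Finset.mem_univ j)
        exact ⟨Finset.prod_eq_one (fun j _ => by rw [hall j, pow_zero]), h00⟩
      · right
        have hsum1' : ∑ j, α i s j = 1 := le_antisymm hdge h1
        have hexj : ∃ j, α i s j ≠ 0 := by
          by_contra h
          push_neg at h
          rw [Finset.sum_eq_zero (fun j _ => h j)] at hsum1'
          omega
        obtain ⟨j, hj⟩ := hexj
        have hothers : ∀ k, k ≠ j → α i s k = 0 := by
          intro k hk
          have hadd := Finset.add_sum_erase Finset.univ (α i s) (Finset.mem_univ j)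
          rw [hsum1'] at hadd
          have : ∑ k ∈ Finset.univ.erase j, α i s k = 0 := by omega
          exact Finset.sum_eq_zero_iff.1 this k (Finset.mem_erase.2 ⟨hk, Finset.mem_univ k⟩)
        have hαj : α i s j = 1 := by
          have hadd := Finset.add_sum_erase Finset.univ (α i s) (Finset.mem_univ j)
          rw [hsum1'] at hadd
          omega
        have hprod : ∏ j', y j' ^ α i s j' = y j := by
          rw [Finset.prod_eq_single j (fun k _ hk => by rw [hothers k hk, pow_zero])
            (fun h => absurd (Finset.mem_univ j) h), hαj, pow_one]
        exact ⟨j, hj, hsupp j hj, hprod, hothers⟩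
    have hterm_ge : ∀ s ∈ Finset.univ (α := R i), p i s * m ≤ p i s * ∏ j, y j ^ α i s j := by
      intro s _
      by_cases hps' : p i s = 0
      · rw [hps']; simp
      · apply mul_le_mul_of_nonneg_left _ (hp i s)
        rcases hterm_class s hps' with ⟨h1, -⟩ | ⟨j, -, hjE, hprod, -⟩
        · rw [h1]; linarith
        · rw [hprod]; exact hmle j hjE
    have hsums : ∑ s, p i s * m = ∑ s, p i s * ∏ j, y j ^ α i s j := by
      rw [hQy, hym, ← Finset.sum_mul, hsum1, one_mul]
    have hterm_eq := (Finset.sum_eq_sum_iff_of_le hterm_ge).1 hsums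
    have hreq : ∏ j, y j ^ α i r j = m :=
      (mul_left_cancel₀ hpr (hterm_eq r (Finset.mem_univ r))).symm
    rcases hterm_class r hpr with ⟨h1, -⟩ | ⟨j, hj, hjE, hprod, hothers⟩
    · rw [h1] at hreq; exact absurd hreq.symm (ne_of_lt hm1)
    · have hyjm : y j = m := by rw [hprod] at hreq; exact hreq
      have hsum1' : ∑ k, α i r k = 1 := by
        have hadd := Finset.add_sum_erase Finset.univ (α i r) (Finset.mem_univ j)
        have hz' : ∑ k ∈ Finset.univ.erase j, α i r k = 0 :=
          Finset.sum_eq_zero (fun k hk => hothers k (Finset.mem_erase.1 hk).1)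
        have hd1 := (hterms r hpr).2
        omega
      refine ⟨hsum1', ?_⟩
      intro k hk
      have hkj : k = j := by
        by_contra hne
        exact hk (hothers k hne)
      rw [hkj]
      exact ⟨hjE, hyjm⟩
  -- extract a bottom SCC inside Em and contradict LDF
  have hEmcl : ∀ i ∈ Em, ∀ j, (∃ r, p i r ≠ 0 ∧ α i r j ≠ 0) → j ∈ Em := by
    intro i hi j ⟨r, hpr, hαr⟩
    exact (hkey i hi r hpr).2 j hαr
  obtain ⟨T, hTne, hTmut, hTcl, hTsub⟩ :=
    exists_bottom_scc (fun i j => ∃ r, p i r ≠ 0 ∧ α i r j ≠ 0) Em ⟨i1, ⟨hi1E, hm.symm⟩⟩ hEmcl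
  apply hldf
  refine ⟨T, hTne, hTmut, hTcl, ?_⟩
  intro i hiT
  have hiEm : i ∈ Em := hTsub hiT
  exact ⟨fun r hpr => (hkey i hiEm r hpr).1, (hEfacts i hiEm.1).2.1⟩

lemma ProbPoly.eval_nonneg {n : ℕ} (Q : ProbPoly n) (x : Fin n → ℝ) (hx : ∀ i, 0 ≤ x i) :
    0 ≤ Q.eval x := by
  apply Finset.sum_nonneg
  intro r _
  exact mul_nonneg (Q.p_nonneg r) (Finset.prod_nonneg fun j _ => pow_nonneg (hx j) _)

end AuxProofs

/-- For a minimax-PPS whose greatest fixed point `g*` satisfies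
`g* < 1` in every coordinate, and any LDF policy `τ'` for the min player,
`g* ≤ q*_{*,τ'}`, the least fixed point of the maxPPS `P_{*,τ'}`. -/
theorem minimaxPPS_GFP_le_LFP_of_LDF_policy {n : ℕ} (P : MinimaxPPS n)
    (g : Fin n → ℝ) (hg : IsGFP P.eval g) (hlt : ∀ i, g i < 1)
    (τ' : (i : Fin n) → Fin (P.nc i) → ℝ) (hτ : ∀ i, IsDist (τ' i))
    (hLDF : P.IsLDFPolicy τ') :
    ∀ q', IsLFP (P.fixMin τ') q' → g ≤ q' := by
  classical
  intro q' hq'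
  obtain ⟨hq'box, hq'fix, -⟩ := hq'
  obtain ⟨hgbox, hgfix, -⟩ := hg
  -- choose a maximizing row for each coordinate at g
  have hchoose : ∀ i : Fin n, ∃ j : Fin (P.nr i), ∀ j' : Fin (P.nr i),
      (∑ k, τ' i k * (P.q i j' k).eval g) ≤ ∑ k, τ' i k * (P.q i j k).eval g := by
    intro i
    obtain ⟨j, -, hmax⟩ := Finset.exists_max_image Finset.univ
      (fun j => ∑ k, τ' i k * (P.q i j k).eval g) ⟨⟨0, P.nr_pos i⟩, Finset.mem_univ _⟩
    exact ⟨j, fun j' => hmax j' (Finset.mem_univ j')⟩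
  choose jstar hjstar using hchoose
  -- Step A : g i ≤ row value of jstar at g
  have hgle : ∀ i, g i ≤ ∑ k, τ' i k * (P.q i (jstar i) k).eval g := by
    intro i
    have hgi : g i = gameVal (P.A i g) := by
      conv_lhs => rw [← hgfix]
      rfl
    rw [hgi]
    haveI : Nonempty (stdSimplex ℝ (Fin (P.nr i))) := by
      refine ⟨⟨fun j => if j = ⟨0, P.nr_pos i⟩ then 1 else 0, fun j => ?_, ?_⟩⟩
      · by_cases h : j = ⟨0, P.nr_pos i⟩ <;> simp [h]
      · simp
    apply ciSup_le
    intro s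
    have hAnn : ∀ j k, 0 ≤ P.A i g j k := by
      intro j k
      exact ProbPoly.eval_nonneg _ _ (fun l => (hgbox l).1)
    have hτmem : τ' i ∈ stdSimplex ℝ (Fin (P.nc i)) := ⟨(hτ i).1, (hτ i).2⟩
    have hbd : BddBelow (Set.range fun t : stdSimplex ℝ (Fin (P.nc i)) =>
        ∑ j, ∑ k, s.1 j * (P.A i g) j k * t.1 k) := by
      refine ⟨0, ?_⟩
      rintro x ⟨t, rfl⟩
      apply Finset.sum_nonneg
      intro j _
      apply Finset.sum_nonneg
      intro k _
      exact mul_nonneg (mul_nonneg (s.2.1 j) (hAnn j k)) (t.2.1 k)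
    refine le_trans (ciInf_le hbd ⟨τ' i, hτmem⟩) ?_
    have hrow : ∀ j, ∑ k, s.1 j * (P.A i g) j k * (τ' i) k
        = s.1 j * ∑ k, τ' i k * (P.q i j k).eval g := by
      intro j
      rw [Finset.mul_sum]
      refine Finset.sum_congr rfl (fun k _ => ?_)
      show s.1 j * (P.q i j k).eval g * τ' i k = _
      ring
    calc ∑ j, ∑ k, s.1 j * (P.A i g) j k * (τ' i) k
        = ∑ j, s.1 j * ∑ k, τ' i k * (P.q i j k).eval g :=
          Finset.sum_congr rfl (fun j _ => hrow j)
      _ ≤ ∑ j, s.1 j * ∑ k, τ' i k * (P.q i (jstar i) k).eval g := by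
          refine Finset.sum_le_sum (fun j _ => ?_)
          exact mul_le_mul_of_nonneg_left (hjstar i j) (s.2.1 j)
      _ = ∑ k, τ' i k * (P.q i (jstar i) k).eval g := by
          rw [← Finset.sum_mul, s.2.2, one_mul]
  -- Step B : the jstar row value at q' is at most q'
  have hq'le : ∀ i, ∑ k, τ' i k * (P.q i (jstar i) k).eval q' ≤ q' i := by
    intro i
    have : q' i = P.fixMin τ' q' i := by rw [hq'fix]
    rw [this]
    haveI : Nonempty (Fin (P.nr i)) := ⟨⟨0, P.nr_pos i⟩⟩
    show _ ≤ ⨆ j : Fin (P.nr i), ∑ k, τ' i k * (P.q i j k).eval q'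
    exact le_ciSup (Set.Finite.bddAbove (Set.finite_range
      (fun j : Fin (P.nr i) => ∑ k, τ' i k * (P.q i j k).eval q'))) (jstar i)
  -- the PPS obtained by fixing jstar rows and the min policy
  set R : Fin n → Type := fun i => Σ b : Fin (P.nc i), Fin ((P.q i (jstar i) b).numTerms)
    with hR
  set pp : (i : Fin n) → R i → ℝ :=
    fun i r => τ' i r.1 * (P.q i (jstar i) r.1).p r.2 with hpp
  set ee : (i : Fin n) → R i → Fin n → ℕ :=
    fun i r => (P.q i (jstar i) r.1).expo r.2 with hee
  have hsig : ∀ (i : Fin n) (x : Fin n → ℝ),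
      ∑ r : R i, pp i r * ∏ j, x j ^ ee i r j = ∑ k, τ' i k * (P.q i (jstar i) k).eval x := by
    intro i x
    rw [← Finset.univ_sigma_univ, Finset.sum_sigma]
    refine Finset.sum_congr rfl (fun b _ => ?_)
    rw [ProbPoly.eval, Finset.mul_sum]
    exact Finset.sum_congr rfl (fun t _ => by rw [hpp, hee]; ring)
  have hppn : ∀ (i : Fin n) (r : R i), 0 ≤ pp i r :=
    fun i r => mul_nonneg ((hτ i).1 r.1) ((P.q i (jstar i) r.1).p_nonneg r.2)
  have hpps : ∀ i, ∑ r : R i, pp i r ≤ 1 := by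
    intro i
    rw [← Finset.univ_sigma_univ, Finset.sum_sigma]
    calc ∑ b, ∑ t, pp i ⟨b, t⟩ = ∑ b, τ' i b * ∑ t, (P.q i (jstar i) b).p t := by
          refine Finset.sum_congr rfl (fun b _ => ?_)
          rw [Finset.mul_sum]
      _ ≤ ∑ b, τ' i b * 1 := by
          refine Finset.sum_le_sum (fun b _ => ?_)
          exact mul_le_mul_of_nonneg_left ((P.q i (jstar i) b).p_sum_le_one) ((hτ i).1 b)
      _ = 1 := by simp [(hτ i).2]
  -- transfer the LDF hypothesis
  set σ0 : (i : Fin n) → Fin (P.nr i) → ℝ :=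
    fun i a => if a = jstar i then 1 else 0 with hσ0
  have hσdist : ∀ i, IsDist (σ0 i) := by
    intro i
    constructor
    · intro a
      by_cases h : a = jstar i <;> simp [hσ0, h]
    · simp [hσ0]
  have hσne : ∀ i a, σ0 i a ≠ 0 ↔ a = jstar i := by
    intro i a
    by_cases h : a = jstar i <;> simp [hσ0, h]
  have hldf : ¬ IsLDBottom (fun i j => ∃ r, pp i r ≠ 0 ∧ ee i r j ≠ 0)
      (fun i => (∀ r, pp i r ≠ 0 → ∑ j, ee i r j = 1) ∧ ∑ r : R i, pp i r = 1) := by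
    intro ⟨S, hSne, hSmut, hScl, hSld⟩
    apply hLDF σ0 hσdist
    have hdep : ∀ i j, (∃ r, pp i r ≠ 0 ∧ ee i r j ≠ 0) ↔ P.dependsMix σ0 τ' i j := by
      intro i j
      constructor
      · rintro ⟨⟨b, t⟩, hne, hexp⟩
        rw [hpp] at hne
        rcases mul_ne_zero_iff.1 hne with ⟨h1, h2⟩
        exact ⟨jstar i, b, t, (hσne i (jstar i)).2 rfl, h1, h2, hexp⟩
      · rintro ⟨a, b, t, hσa, hτb, hpb, hexp⟩
        have ha : a = jstar i := (hσne i a).1 hσa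
        subst ha
        exact ⟨⟨b, t⟩, mul_ne_zero hτb hpb, hexp⟩
    have hld : ∀ i, ((∀ r, pp i r ≠ 0 → ∑ j, ee i r j = 1) ∧ ∑ r : R i, pp i r = 1)
        → P.IsLDMixAt σ0 τ' i := by
      intro i ⟨h1, h2⟩
      constructor
      · intro a b t hσa hτb hpb
        have ha : a = jstar i := (hσne i a).1 hσa
        subst ha
        exact h1 ⟨b, t⟩ (mul_ne_zero hτb hpb)
      · rw [Finset.sum_eq_single (jstar i)]
        · calc ∑ b, σ0 i (jstar i) * τ' i b * ∑ t, (P.q i (jstar i) b).p t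
              = ∑ b, ∑ t, pp i ⟨b, t⟩ := by
                refine Finset.sum_congr rfl (fun b _ => ?_)
                have : σ0 i (jstar i) = 1 := by simp [hσ0]
                rw [this, one_mul, Finset.mul_sum]
            _ = ∑ r : R i, pp i r := by rw [← Finset.univ_sigma_univ, Finset.sum_sigma]
            _ = 1 := h2
        · intro a _ ha
          have : σ0 i a = 0 := by simp [hσ0, ha]
          refine Finset.sum_eq_zero (fun b _ => ?_)
          rw [this, zero_mul, zero_mul]
        · intro h
          exact absurd (Finset.mem_univ (jstar i)) h
    refine ⟨S, hSne, ?_, ?_, fun i hi => hld i (hSld i hi)⟩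
    · intro i hi j hj
      exact Relation.ReflTransGen.mono (fun a b h => (hdep a b).1 h) _ _ (hSmut i hi j hj)
    · intro i hi j hdepij
      exact hScl i hi j ((hdep i j).2 hdepij)
  -- apply the core lemma
  exact core_lemma R pp ee hppn hpps hldf q'
    (fun i => (hq'box i).1) (fun i => (hq'box i).2)
    (fun i => by rw [hsig i q']; exact hq'le i)
    g (fun i => (hgbox i).1) hlt
    (fun i => by rw [hsig i g]; exact hgle i)
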